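/- Let n ≥ 1 and k ≥ 0 be integers and x > 0. Then −(ψ(x)/n)·T'_{n,k}(x)·P'_{n,k}(x) = k(n+k−1)·P_{n+1,k−2}(x) − (k−1)(n+k)·P_{n+1,k−1}(x) − k(n+k+1)·P_{n+1,k}(x) + (k+1)(n+k)·P_{n+1,k+1}(x), where T'_{n,k}(x) = −k(k−1)/x² + (n+k)(n+k+1)/(1+x)², P'_{n,k} is the derivative of P_{n,k}, and terms with negative second index are interpreted as 0. -/

import Mathlib

open MeasureTheory Filter Set

/-- Baskakov basis functions `P_{n,k}(x)`, with `P_{n,k} := 0` for `k < 0`. -/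
noncomputable def P (n : ℕ) (k : ℤ) (x : ℝ) : ℝ :=
  if k < 0 then 0
  else (Nat.choose (n + k.toNat - 1) k.toNat : ℝ) * x ^ k.toNat * (1 + x) ^ (-(n : ℤ) - k)

/-- The weight `ψ(x) = x(1+x)`. -/
noncomputable def psi (x : ℝ) : ℝ := x * (1 + x)

/-- The differential operator `D̃ f = ψ f''`. -/
noncomputable def Dt (f : ℝ → ℝ) : ℝ → ℝ := fun x => psi x * deriv (deriv f) x

/-- The functionals `v_{n,k}`. -/
noncomputable def v (n k : ℕ) (f : ℝ → ℝ) : ℝ :=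
  if k = 0 then f 0
  else ((n : ℝ) + 1) * ∫ t in Set.Ioi (0 : ℝ), P (n + 2) ((k : ℤ) - 1) t * f t

/-- The Goodman–Sharma–Baskakov operator `V_n`. -/
noncomputable def V (n : ℕ) (f : ℝ → ℝ) (x : ℝ) : ℝ :=
  ∑' k : ℕ, v n k f * P n (k : ℤ) x

/-- The modified operator `Ṽ_n`. -/
noncomputable def Vt (n : ℕ) (f : ℝ → ℝ) (x : ℝ) : ℝ :=
  ∑' k : ℕ, v n k f * (P n (k : ℤ) x - (1 / (n : ℝ)) * Dt (P n (k : ℤ)) x)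

/-- Supremum norm on `[0,∞)`. -/
noncomputable def supNorm (f : ℝ → ℝ) : ℝ := ⨆ x ∈ Set.Ici (0 : ℝ), |f x|

/-- `f` is bounded and continuous on `[0,∞)`. -/
def BddContOn (f : ℝ → ℝ) : Prop :=
  ContinuousOn f (Set.Ici 0) ∧ ∃ M, ∀ x ∈ Set.Ici (0 : ℝ), |f x| ≤ M

/-- The space `W²(ψ)`: `g, g'` (locally) differentiable on `(0,∞)` and `D̃ g` bounded. -/
def MemW2 (g : ℝ → ℝ) : Prop :=
  DifferentiableOn ℝ g (Set.Ioi 0) ∧ DifferentiableOn ℝ (deriv g) (Set.Ioi 0) ∧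
    ∃ M, ∀ x ∈ Set.Ioi (0 : ℝ), |Dt g x| ≤ M

/-- The space `W²₀(ψ)`: members of `W²(ψ)` with `D̃ g(x) → 0` as `x → 0⁺`. -/
def MemW20 (g : ℝ → ℝ) : Prop :=
  MemW2 g ∧ Filter.Tendsto (Dt g) (nhdsWithin 0 (Set.Ioi 0)) (nhds 0)

/-- The K-functional `K(f,t)`. -/
noncomputable def Kfun (f : ℝ → ℝ) (t : ℝ) : ℝ :=
  sInf {a : ℝ | ∃ g : ℝ → ℝ, MemW20 g ∧ MemW2 (Dt g) ∧
    a = supNorm (fun x => f x - g x) + t * supNorm (Dt (Dt g))}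

/-- The function `T_{n,k}(x)`. -/
noncomputable def T (n : ℕ) (k : ℤ) (x : ℝ) : ℝ :=
  (k : ℝ) * ((k : ℝ) - 1) * (1 + x) / x - 2 * (k : ℝ) * ((n : ℝ) + (k : ℝ))
    + ((n : ℝ) + (k : ℝ)) * ((n : ℝ) + (k : ℝ) + 1) * x / (1 + x)

lemma P_nat (n j : ℕ) (x : ℝ) :
    P n (j : ℤ) x = (Nat.choose (n + j - 1) j : ℝ) * x ^ j * ((1 + x) ^ (n + j) : ℝ)⁻¹ := by
  rw [P, if_neg (by omega), Int.toNat_natCast,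
    show (-(n : ℤ) - (j:ℤ)) = -(((n+j : ℕ):ℤ)) by push_cast; ring, zpow_neg, zpow_natCast]

lemma P_neg (n : ℕ) (k : ℤ) (hk : k < 0) (x : ℝ) : P n k x = 0 := by
  rw [P, if_pos hk]

lemma choose_div (n k : ℕ) : (Nat.choose (n+k+1) (k+1) : ℝ)
    = ((n:ℝ)+k+1) * (Nat.choose (n+k) k : ℝ) / ((k:ℝ)+1) := by
  rw [eq_div_iff (by positivity)]
  have h := Nat.add_one_mul_choose_eq (n + k) k
  exact_mod_cast h.symm

lemma choose_div2 (n m : ℕ) (hn : 1 ≤ n) : (Nat.choose (n+m) m : ℝ)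
    = ((m:ℝ)+1) * (Nat.choose (n+m) (m+1) : ℝ) / (n:ℝ) := by
  rw [eq_div_iff (by positivity)]
  have h := Nat.choose_succ_right_eq (n+m) m
  rw [show n+m-m = n from by omega] at h
  exact_mod_cast (h.symm.trans (Nat.mul_comm _ _))

lemma choose_div3 (n m : ℕ) (hn : 1 ≤ n) : (Nat.choose (n+m+1) (m+1) : ℝ)
    = ((n:ℝ)+m+1) * (Nat.choose (n+m) (m+1) : ℝ) / (n:ℝ) := by
  have hp : Nat.choose (n+m+1) (m+1) = Nat.choose (n+m) m + Nat.choose (n+m) (m+1) :=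
    Nat.choose_succ_succ _ _
  have hn' : (n:ℝ) ≠ 0 := by positivity
  rw [hp]
  push_cast
  rw [choose_div2 n m hn]
  field_simp
  ring

lemma hasDerivAt_P (n : ℕ) (hn : 1 ≤ n) (k : ℕ) (x : ℝ) (hx : 0 < x) :
    HasDerivAt (P n (k : ℤ))
      ((n : ℝ) * (P (n+1) ((k:ℤ) - 1) x - P (n+1) (k : ℤ) x)) x := by
  have h1x : (0:ℝ) < 1 + x := by linarith
  have h1 : HasDerivAt (fun y : ℝ => 1 + y) 1 x := (hasDerivAt_id x).const_add 1
  have h2 : HasDerivAt (fun y : ℝ => (1 + y) ^ (-(n : ℤ) - k))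
      (((-(n : ℤ) - k : ℤ) : ℝ) * (1 + x) ^ (-(n : ℤ) - k - 1) * 1) x :=
    (hasDerivAt_zpow _ _ (Or.inl h1x.ne')).comp x h1
  have h3 : HasDerivAt (fun y : ℝ => y ^ k) ((k:ℝ) * x ^ (k-1)) x := hasDerivAt_pow k x
  have h4 := ((h3.mul h2).const_mul ((Nat.choose (n + k - 1) k : ℝ)))
  have heq : P n (k : ℤ) = fun y : ℝ =>
      (Nat.choose (n + k - 1) k : ℝ) * (y ^ k * (1 + y) ^ (-(n : ℤ) - k)) := by
    funext y
    rw [P, if_neg (by omega), Int.toNat_natCast, mul_assoc]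
  rw [heq]
  convert h4 using 1
  · rfl
  · rfl
  · rfl
  rw [show (-(n : ℤ) - (k:ℤ)) = -(((n+k : ℕ):ℤ)) by push_cast; ring,
    show (-(((n+k : ℕ):ℤ))) - 1 = -(((n+k+1 : ℕ):ℤ)) by push_cast; ring,
    zpow_neg, zpow_natCast, zpow_neg, zpow_natCast]
  rcases k with _ | m
  · rw [P_neg (n+1) _ (show ((0:ℕ):ℤ) - 1 < 0 from by norm_num), P_nat]
    simp only [show n+1+0-1 = n from by omega, show n+1+0 = n+1 from by omega,
      show n+0-1 = n-1 from by omega, show n+0 = n from by omega,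
      show n+0+1 = n+1 from by omega]
    push_cast
    field_simp
    simp only [Nat.choose_zero_right, Nat.cast_one]
    ring
  · rw [show ((m+1 : ℕ):ℤ) - 1 = ((m:ℕ):ℤ) from by push_cast; ring, P_nat, P_nat]
    simp only [show n+1+m-1 = n+m from by omega, show n+1+(m+1)-1 = n+m+1 from by omega,
      show n+(m+1)-1 = n+m from by omega, show m+1-1 = m from rfl]
    simp only [show n+1+(m+1) = n+m+2 from by omega, show n+1+m = n+m+1 from by omega,
      show n+(m+1) = n+m+1 from by omega, show n+(m+1)+1 = n+m+2 from by omega,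
      show n+m+1+1 = n+m+2 from by omega]
    rw [choose_div2 n m hn, choose_div3 n m hn]
    have hn' : (n:ℝ) ≠ 0 := by positivity
    push_cast
    field_simp
    ring

lemma L1 (n k : ℕ) (x : ℝ) (hx : 0 < x) :
    (k:ℝ) * ((k:ℝ) - 1) * (1 + x) / x * P (n+1) ((k:ℤ) - 1) x
      = (k:ℝ) * ((n:ℝ) + (k:ℝ) - 1) * P (n+1) ((k:ℤ) - 2) x := by
  have h1x : (0:ℝ) < 1 + x := by linarith
  rcases k with _ | _ | m
  · simp
  · rw [P_neg (n+1) _ (show ((1:ℕ):ℤ) - 2 < 0 from by norm_num)]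
    norm_num
  · rw [show (((m+2 : ℕ)):ℤ) - 1 = ((m+1 : ℕ):ℤ) from by push_cast; ring,
      show (((m+2 : ℕ)):ℤ) - 2 = ((m : ℕ):ℤ) from by push_cast; ring, P_nat, P_nat]
    simp only [show n+1+(m+1)-1 = n+m+1 from by omega, show n+1+m-1 = n+m from by omega]
    simp only [show n+1+(m+1) = (n+1+m)+1 from by omega]
    rw [choose_div]
    have hm : ((m:ℝ)+1) ≠ 0 := by positivity
    push_cast
    field_simp
    ring

lemma L2 (n k : ℕ) (x : ℝ) (hx : 0 < x) :
    (k:ℝ) * ((k:ℝ) - 1) * (1 + x) / x * P (n+1) (k:ℤ) x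
      = ((k:ℝ) - 1) * ((n:ℝ) + (k:ℝ)) * P (n+1) ((k:ℤ) - 1) x := by
  have h1x : (0:ℝ) < 1 + x := by linarith
  rcases k with _ | m
  · simp [P_neg (n+1) (-1) (by norm_num)]
  · rw [show (((m+1 : ℕ)):ℤ) - 1 = ((m : ℕ):ℤ) from by push_cast; ring, P_nat, P_nat]
    simp only [show n+1+(m+1)-1 = n+m+1 from by omega, show n+1+m-1 = n+m from by omega]
    simp only [show n+1+(m+1) = (n+1+m)+1 from by omega]
    rw [choose_div]
    have hm : ((m:ℝ)+1) ≠ 0 := by positivity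
    push_cast
    field_simp
    ring

lemma L3 (n k : ℕ) (x : ℝ) (hx : 0 < x) :
    ((n:ℝ) + (k:ℝ)) * ((n:ℝ) + (k:ℝ) + 1) * x / (1 + x) * P (n+1) ((k:ℤ) - 1) x
      = (k:ℝ) * ((n:ℝ) + (k:ℝ) + 1) * P (n+1) (k:ℤ) x := by
  have h1x : (0:ℝ) < 1 + x := by linarith
  rcases k with _ | m
  · rw [P_neg (n+1) _ (show ((0:ℕ):ℤ) - 1 < 0 from by norm_num)]
    norm_num
  · rw [show (((m+1 : ℕ)):ℤ) - 1 = ((m : ℕ):ℤ) from by push_cast; ring, P_nat, P_nat]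
    simp only [show n+1+(m+1)-1 = n+m+1 from by omega, show n+1+m-1 = n+m from by omega]
    simp only [show n+1+(m+1) = (n+1+m)+1 from by omega]
    rw [choose_div]
    have hm : ((m:ℝ)+1) ≠ 0 := by positivity
    push_cast
    field_simp
    ring

lemma L4 (n k : ℕ) (x : ℝ) (hx : 0 < x) :
    ((n:ℝ) + (k:ℝ)) * ((n:ℝ) + (k:ℝ) + 1) * x / (1 + x) * P (n+1) (k : ℤ) x
      = ((k:ℝ) + 1) * ((n:ℝ) + (k:ℝ)) * P (n+1) ((k:ℤ) + 1) x := by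
  have h1x : (0:ℝ) < 1 + x := by linarith
  rw [show ((k:ℤ)+1) = ((k+1 : ℕ) : ℤ) from by push_cast; ring, P_nat, P_nat]
  simp only [show n+1+(k+1)-1 = n+k+1 from by omega, show n+1+k-1 = n+k from by omega]
  simp only [show n+1+(k+1) = (n+1+k)+1 from by omega]
  rw [choose_div]
  have hk : ((k:ℝ)+1) ≠ 0 := by positivity
  field_simp
  ring

theorem T'_P'_identity (n : ℕ) (hn : 1 ≤ n) (k : ℕ) (x : ℝ) (hx : 0 < x) :
    -(psi x / (n : ℝ))
        * (-((k : ℝ) * ((k : ℝ) - 1)) / x ^ 2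
            + ((n : ℝ) + (k : ℝ)) * ((n : ℝ) + (k : ℝ) + 1) / (1 + x) ^ 2)
        * deriv (P n (k : ℤ)) x =
      (k : ℝ) * ((n : ℝ) + (k : ℝ) - 1) * P (n + 1) ((k : ℤ) - 2) x
        - ((k : ℝ) - 1) * ((n : ℝ) + (k : ℝ)) * P (n + 1) ((k : ℤ) - 1) x
        - (k : ℝ) * ((n : ℝ) + (k : ℝ) + 1) * P (n + 1) (k : ℤ) x
        + ((k : ℝ) + 1) * ((n : ℝ) + (k : ℝ)) * P (n + 1) ((k : ℤ) + 1) x := by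
  have h1x : (0:ℝ) < 1 + x := by linarith
  have hn' : (n:ℝ) ≠ 0 := by positivity
  rw [(hasDerivAt_P n hn k x hx).deriv]
  have key : -(psi x / (n : ℝ))
        * (-((k : ℝ) * ((k : ℝ) - 1)) / x ^ 2
            + ((n : ℝ) + (k : ℝ)) * ((n : ℝ) + (k : ℝ) + 1) / (1 + x) ^ 2)
        * ((n : ℝ) * (P (n+1) ((k:ℤ) - 1) x - P (n+1) (k : ℤ) x)) =
      ((k:ℝ) * ((k:ℝ) - 1) * (1 + x) / x * P (n+1) ((k:ℤ) - 1) x)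
        - ((k:ℝ) * ((k:ℝ) - 1) * (1 + x) / x * P (n+1) (k:ℤ) x)
        - (((n:ℝ) + (k:ℝ)) * ((n:ℝ) + (k:ℝ) + 1) * x / (1 + x) * P (n+1) ((k:ℤ) - 1) x)
        + (((n:ℝ) + (k:ℝ)) * ((n:ℝ) + (k:ℝ) + 1) * x / (1 + x) * P (n+1) (k : ℤ) x) := by
    rw [psi]
    field_simp
    ring
  rw [key, L1 n k x hx, L2 n k x hx, L3 n k x hx, L4 n k x hx]
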